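/- arXiv:1611.04150 — 4 statements merged into one kernel-verified Lean document; each statement's English description precedes it below -/
import Mathlib

section
/- Suppose μ: {1,…,N} → [0,1] satisfies the constraint ∑_{m=0}^{N−1} C(N−1,m)·π_H^m·π_L^(N−1−m)·μ(m+1) ≤ λ with λ ≤ π_L^(N−1), where π_H ∈ (0,1), π_L = 1−π_H. Then the policy μ*(1) = λ/π_L^(N−1), μ*(m) = 0 for m > 1, satisfies the constraint and maximizes the throughput R(μ) = ∑_{m=1}^{N} C(N,m)·π_H^m·π_L^(N−m)·m·μ(m)·(1−μ(m))^(m−1) over all constrained policies. -/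
/-- Small-harvesting regime: when `λ ≤ π_L^(N−1)`, the policy transmitting only
when a single node is active, with probability `λ/π_L^(N−1)`, satisfies the
average-power constraint and maximizes the throughput among all constrained
policies. -/
theorem stmt6 (N : ℕ) (hN : 1 ≤ N) (piH lam : ℝ) (hpiH : piH ∈ Set.Ioo (0:ℝ) 1)
    (hlam0 : 0 ≤ lam) (hlam : lam ≤ (1 - piH) ^ (N - 1)) :
    let piL : ℝ := 1 - piH
    let Q : (ℕ → ℝ) → ℝ := fun μ => ∑ m ∈ Finset.range N,
      ((N - 1).choose m : ℝ) * piH ^ m * piL ^ (N - 1 - m) * μ (m + 1)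
    let R : (ℕ → ℝ) → ℝ := fun μ => ∑ m ∈ Finset.Icc 1 N,
      (N.choose m : ℝ) * piH ^ m * piL ^ (N - m) * m * μ m * (1 - μ m) ^ (m - 1)
    let μstar : ℕ → ℝ := fun m => if m = 1 then lam / piL ^ (N - 1) else 0
    Q μstar ≤ lam ∧
    ∀ μ : ℕ → ℝ, (∀ m ∈ Finset.Icc 1 N, μ m ∈ Set.Icc (0:ℝ) 1) → Q μ ≤ lam →
      R μ ≤ R μstar := by
  obtain ⟨hp0, hp1⟩ := hpiH
  intro piL Q R μstar
  have hpiL : 0 < piL := by simp only [piL]; linarith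
  have hpow : (0:ℝ) < piL ^ (N - 1) := pow_pos hpiL _
  have hQstar : Q μstar = lam := by
    simp only [Q, μstar]
    rw [Finset.sum_eq_single 0]
    · simp only [if_pos rfl, ↓reduceIte, Nat.choose_zero_right, pow_zero, Nat.cast_one, Nat.sub_zero,
        one_mul, mul_one]
      field_simp
    · intro b _ hb
      have : b + 1 ≠ 1 := by omega
      simp [this, hb]
    · intro h
      exact absurd (Finset.mem_range.mpr (by omega)) h
  have hRstar : R μstar = N * piH * lam := by
    simp only [R, μstar]
    rw [Finset.sum_eq_single 1]
    · simp only [if_pos rfl, ↓reduceIte]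
      rw [Nat.choose_one_right]
      simp only [pow_one, Nat.cast_one]
      field_simp
      ring
    · intro b _ hb
      simp [hb]
    · intro h
      exact absurd (Finset.mem_Icc.mpr (by omega)) h
  refine ⟨hQstar.le, ?_⟩
  intro μ hμ hQμ
  rw [hRstar]
  have hNpiH : (0:ℝ) ≤ (N:ℝ) * piH := by positivity
  have key : R μ ≤ (N:ℝ) * piH * Q μ := by
    have hRμ : R μ = ∑ i ∈ Finset.range N,
        (N.choose (1 + i) : ℝ) * piH ^ (1 + i) * piL ^ (N - (1 + i)) * (1 + i : ℕ) *
          μ (1 + i) * (1 - μ (1 + i)) ^ ((1 + i) - 1) := by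
      simp only [R]
      rw [← Finset.Ico_add_one_right_eq_Icc, Finset.sum_Ico_eq_sum_range]
      simp
    rw [hRμ]
    simp only [Q]
    rw [Finset.mul_sum]
    apply Finset.sum_le_sum
    intro i hi
    have hiN : i < N := Finset.mem_range.mp hi
    have hmem : 1 + i ∈ Finset.Icc 1 N := Finset.mem_Icc.mpr ⟨by omega, by omega⟩
    obtain ⟨hμ0, hμ1⟩ := hμ (1 + i) hmem
    have hchoose : (N:ℝ) * ((N - 1).choose i : ℝ) = (N.choose (i + 1) : ℝ) * (i + 1) := by
      have h : N * (N - 1).choose i = N.choose (i + 1) * (i + 1) := by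
        have := Nat.add_one_mul_choose_eq (N - 1) i
        rwa [Nat.sub_add_cancel hN] at this
      exact_mod_cast congrArg (Nat.cast : ℕ → ℝ) h
    have hsub : N - (i + 1) = N - 1 - i := by omega
    have hA : (0:ℝ) ≤ ((N - 1).choose i : ℝ) * piH ^ i * piL ^ (N - 1 - i) * μ (1 + i) := by
      positivity
    have hpowle : (1 - μ (1 + i)) ^ ((1 + i) - 1) ≤ 1 :=
      pow_le_one₀ (by linarith) (by linarith)
    have hpowge : (0:ℝ) ≤ (1 - μ (1 + i)) ^ ((1 + i) - 1) :=
      pow_nonneg (by linarith) _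
    have heq : (N.choose (1 + i) : ℝ) * piH ^ (1 + i) * piL ^ (N - (1 + i)) * (1 + i : ℕ) *
        μ (1 + i)
        = (N:ℝ) * piH * (((N - 1).choose i : ℝ) * piH ^ i * piL ^ (N - 1 - i) * μ (1 + i)) := by
      rw [add_comm 1 i, hsub, pow_add, pow_one]
      push_cast
      linear_combination (-(piH * piH ^ i * piL ^ (N - 1 - i) * μ (i + 1))) * hchoose
    calc (N.choose (1 + i) : ℝ) * piH ^ (1 + i) * piL ^ (N - (1 + i)) * (1 + i : ℕ) *
          μ (1 + i) * (1 - μ (1 + i)) ^ ((1 + i) - 1)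
        ≤ (N.choose (1 + i) : ℝ) * piH ^ (1 + i) * piL ^ (N - (1 + i)) * (1 + i : ℕ) *
          μ (1 + i) * 1 := by
          apply mul_le_mul_of_nonneg_left hpowle
          rw [heq]; positivity
      _ = (N:ℝ) * piH * (((N - 1).choose i : ℝ) * piH ^ i * piL ^ (N - 1 - i) * μ (1 + i)) := by
          rw [mul_one, heq]
      _ = (N:ℝ) * piH * (((N - 1).choose i : ℝ) * piH ^ i * piL ^ (N - 1 - i) * μ (i + 1)) := by
          rw [add_comm 1 i]
  calc R μ ≤ (N:ℝ) * piH * Q μ := key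
    _ ≤ (N:ℝ) * piH * lam := by
        apply mul_le_mul_of_nonneg_left hQμ hNpiH
end

section
/- If λ ≥ (1 − π_L^N)/(N·π_H) (with π_H ∈ (0,1), π_L = 1−π_H, N ≥ 1), then the policy μ*(m) = 1/m for all 1 ≤ m ≤ N maximizes R(μ) = ∑_{m=1}^{N} C(N,m)·π_H^m·π_L^(N−m)·m·μ(m)·(1−μ(m))^(m−1) over all policies μ: {1,…,N} → [0,1], and it satisfies the constraint ∑_{m=0}^{N−1} C(N−1,m)·π_H^m·π_L^(N−1−m)·μ(m+1) ≤ λ. -/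
open Finset

/-- Key pointwise inequality: on `[0,1]`, `x (1-x)^(m-1)` is maximized at `x = 1/m`. -/
lemma key_ineq {m : ℕ} (hm : 1 ≤ m) {x : ℝ} (hx0 : 0 ≤ x) (hx1 : x ≤ 1) :
    x * (1 - x) ^ (m - 1) ≤ (1 / m) * (1 - 1 / m) ^ (m - 1) := by
  rcases eq_or_lt_of_le hm with h1 | h2
  · simp [← h1]; linarith
  · have hm2 : 2 ≤ m := h2
    set t : ℝ := (m : ℝ) with ht
    have ht1 : (1:ℝ) < t := by rw [ht]; exact_mod_cast h2
    have ht0 : (0:ℝ) < t := by linarith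
    have htm1 : (0:ℝ) < t - 1 := by linarith
    -- weighted AM-GM with weights 1/t, (t-1)/t on points t*x, t*(1-x)/(t-1)
    have hw : 1 / t + (t - 1) / t = 1 := by field_simp; ring
    have hp1 : (0:ℝ) ≤ t * x := by positivity
    have hp2 : (0:ℝ) ≤ t * (1 - x) / (t - 1) := by
      have : (0:ℝ) ≤ 1 - x := by linarith
      positivity
    have hamgm := Real.geom_mean_le_arith_mean2_weighted
      (by positivity : (0:ℝ) ≤ 1 / t) (by positivity : (0:ℝ) ≤ (t - 1) / t)
      hp1 hp2 hw
    have hsum : 1 / t * (t * x) + (t - 1) / t * (t * (1 - x) / (t - 1)) = 1 := by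
      field_simp
      ring
    rw [hsum] at hamgm
    -- raise to the m-th power
    have hbase : (0:ℝ) ≤ (t * x) ^ (1 / t) * (t * (1 - x) / (t - 1)) ^ ((t - 1) / t) := by
      positivity
    have hpow : ((t * x) ^ (1 / t) * (t * (1 - x) / (t - 1)) ^ ((t - 1) / t)) ^ m ≤ 1 := by
      calc ((t * x) ^ (1 / t) * (t * (1 - x) / (t - 1)) ^ ((t - 1) / t)) ^ m
          ≤ 1 ^ m := pow_le_pow_left₀ hbase hamgm m
        _ = 1 := one_pow m
    have hexp : ((t * x) ^ (1 / t) * (t * (1 - x) / (t - 1)) ^ ((t - 1) / t)) ^ m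
        = (t * x) * (t * (1 - x) / (t - 1)) ^ (m - 1) := by
      rw [mul_pow, ← Real.rpow_natCast ((t * x) ^ (1 / t)) m,
        ← Real.rpow_natCast ((t * (1 - x) / (t - 1)) ^ ((t - 1) / t)) m,
        ← Real.rpow_natCast (t * (1 - x) / (t - 1)) (m - 1),
        ← Real.rpow_mul hp1, ← Real.rpow_mul hp2]
      have h1 : 1 / t * (m : ℝ) = 1 := by rw [← ht]; field_simp
      have h2 : (t - 1) / t * (m : ℝ) = ((m - 1 : ℕ) : ℝ) := by
        rw [Nat.cast_sub hm, ← ht]; push_cast; field_simp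
      rw [h1, h2, Real.rpow_one]
    rw [hexp] at hpow
    -- now unfold and compare
    have hLHS : (t * x) * (t * (1 - x) / (t - 1)) ^ (m - 1)
        = (x * (1 - x) ^ (m - 1)) * (t ^ m / (t - 1) ^ (m - 1)) := by
      rw [div_pow, mul_pow]
      have : t ^ m = t * t ^ (m - 1) := by
        conv_lhs => rw [show m = (m - 1) + 1 from (Nat.succ_pred_eq_of_pos (by omega)).symm]
        ring
      rw [this]
      field_simp
    rw [hLHS] at hpow
    have hc : (0:ℝ) < t ^ m / (t - 1) ^ (m - 1) := by positivity
    have hR : (1 / t) * (1 - 1 / t) ^ (m - 1) * (t ^ m / (t - 1) ^ (m - 1)) = 1 := by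
      have h11 : 1 - 1 / t = (t - 1) / t := by field_simp
      rw [h11, div_pow]
      have : t ^ m = t * t ^ (m - 1) := by
        conv_lhs => rw [show m = (m - 1) + 1 from (Nat.succ_pred_eq_of_pos (by omega)).symm]
        ring
      rw [this]
      field_simp
    rw [← mul_le_mul_iff_of_pos_right hc, hR]
    exact hpow

/-- Large-harvesting regime: when `λ ≥ (1 − π_L^N)/(N·π_H)`, the policy
`μ*(m) = 1/m` maximizes the throughput over all policies with values in `[0,1]`
and satisfies the average-power constraint. -/
theorem stmt7 (N : ℕ) (hN : 1 ≤ N) (piH lam : ℝ) (hpiH : piH ∈ Set.Ioo (0:ℝ) 1)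
    (hlam : (1 - (1 - piH) ^ N) / (N * piH) ≤ lam) :
    let piL : ℝ := 1 - piH
    let Q : (ℕ → ℝ) → ℝ := fun μ => ∑ m ∈ Finset.range N,
      ((N - 1).choose m : ℝ) * piH ^ m * piL ^ (N - 1 - m) * μ (m + 1)
    let R : (ℕ → ℝ) → ℝ := fun μ => ∑ m ∈ Finset.Icc 1 N,
      (N.choose m : ℝ) * piH ^ m * piL ^ (N - m) * m * μ m * (1 - μ m) ^ (m - 1)
    let μstar : ℕ → ℝ := fun m => 1 / m
    Q μstar ≤ lam ∧
    ∀ μ : ℕ → ℝ, (∀ m ∈ Finset.Icc 1 N, μ m ∈ Set.Icc (0:ℝ) 1) →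
      R μ ≤ R μstar := by
  intro piL Q R μstar
  obtain ⟨hpiH0, hpiH1⟩ := hpiH
  have hpiL0 : (0:ℝ) ≤ piL := by simp only [piL]; linarith
  obtain ⟨n, rfl⟩ : ∃ n, N = n + 1 := ⟨N - 1, (Nat.succ_pred_eq_of_pos hN).symm⟩
  constructor
  · -- constraint
    refine le_trans ?_ hlam
    have hNpiH : (0:ℝ) < ((n + 1 : ℕ) : ℝ) * piH := by positivity
    have hkey : ((n + 1 : ℕ) : ℝ) * piH * Q μstar = 1 - piL ^ (n + 1) := by
      have hbin : (piH + piL) ^ (n + 1)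
          = ∑ k ∈ range (n + 2), piH ^ k * piL ^ (n + 1 - k) * ((n+1).choose k : ℝ) :=
        add_pow piH piL (n + 1)
      have hone : piH + piL = 1 := by simp [piL]
      rw [hone, one_pow] at hbin
      rw [Finset.sum_range_succ'] at hbin
      simp only [pow_zero, Nat.choose_zero_right, Nat.cast_one, one_mul, mul_one,
        Nat.sub_zero] at hbin
      simp only [Q, μstar, Finset.mul_sum]
      rw [eq_sub_iff_add_eq]
      conv_rhs => rw [hbin]
      congr 1
      apply Finset.sum_congr rfl
      intro m hm
      have hcast : ((n + 1 : ℕ) : ℝ) * ((n.choose m : ℕ) : ℝ)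
          = (((n+1).choose (m+1) : ℕ) : ℝ) * ((m + 1 : ℕ) : ℝ) := by
        exact_mod_cast congrArg (Nat.cast : ℕ → ℝ) (Nat.add_one_mul_choose_eq n m)
      have hm1 : ((m + 1 : ℕ) : ℝ) ≠ 0 := by positivity
      simp only [Nat.add_sub_cancel]
      rw [show n + 1 - (m + 1) = n - m from by omega]
      field_simp
      push_cast at hcast ⊢
      linear_combination (piH ^ (m + 1) * piL ^ (n - m)) * hcast
    have hQ : Q μstar = (1 - piL ^ (n + 1)) / (((n + 1 : ℕ) : ℝ) * piH) := by
      rw [eq_div_iff (ne_of_gt hNpiH)]; linarith [hkey]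
    rw [hQ]
  · intro μ hμ
    apply Finset.sum_le_sum
    intro m hm
    simp only [Finset.mem_Icc] at hm
    obtain ⟨hm1, hmN⟩ := hm
    obtain ⟨hx0, hx1⟩ := hμ m (Finset.mem_Icc.mpr ⟨hm1, hmN⟩)
    have hkey := key_ineq hm1 hx0 hx1
    have hc : (0:ℝ) ≤ ((n+1).choose m : ℝ) * piH ^ m * piL ^ (n + 1 - m) * m := by
      positivity
    have hstar : μstar m = 1 / (m : ℝ) := rfl
    calc ((n+1).choose m : ℝ) * piH ^ m * piL ^ (n + 1 - m) * m * μ m * (1 - μ m) ^ (m - 1)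
        = (((n+1).choose m : ℝ) * piH ^ m * piL ^ (n + 1 - m) * m)
            * (μ m * (1 - μ m) ^ (m - 1)) := by ring
      _ ≤ (((n+1).choose m : ℝ) * piH ^ m * piL ^ (n + 1 - m) * m)
            * ((1 / m) * (1 - 1 / m) ^ (m - 1)) := by
          exact mul_le_mul_of_nonneg_left hkey hc
      _ = ((n+1).choose m : ℝ) * piH ^ m * piL ^ (n + 1 - m) * m * μstar m
            * (1 - μstar m) ^ (m - 1) := by rw [hstar]; ring
end

section
/- Any policy μ: {1,…,N} → [0,1] with μ(m₀) > 1/m₀ for some m₀ ≥ 2 is strictly dominated: replacing μ(m₀) by 1/m₀ strictly increases the throughput R(μ) and strictly decreases the average power Q(μ). -/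
/-- `x ↦ x*(1-x)^(m-1)` is strictly decreasing past `1/m`. -/
lemma aux_dec (m : ℕ) (hm : 2 ≤ m) (x : ℝ) (hx1 : 1 / (m:ℝ) < x) (hx2 : x ≤ 1) :
    x * (1 - x) ^ (m - 1) < (1 / (m:ℝ)) * (1 - 1 / (m:ℝ)) ^ (m - 1) := by
  have hm0 : (0:ℝ) < m := by positivity
  set f : ℝ → ℝ := fun y => y * (1 - y) ^ (m - 1) with hf
  have hd : ∀ y : ℝ, HasDerivAt f
      (1 * (1 - y) ^ (m - 1) + y * (((m - 1 : ℕ) : ℝ) * (1 - y) ^ (m - 1 - 1) * (-1))) y := by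
    intro y
    have h1 : HasDerivAt (fun y : ℝ => 1 - y) (-1) y := by
      simpa using (hasDerivAt_id y).const_sub (1:ℝ)
    exact (hasDerivAt_id y).mul (h1.pow (m - 1))
  have hanti : StrictAntiOn f (Set.Icc (1 / (m:ℝ)) 1) := by
    apply strictAntiOn_of_deriv_neg (convex_Icc _ _)
    · exact Continuous.continuousOn (by continuity)
    · intro y hy
      rw [interior_Icc] at hy
      rw [(hd y).deriv]
      have hy1 : (0:ℝ) < 1 - y := by linarith [hy.2]
      have key : 1 * (1 - y) ^ (m - 1) + y * (((m - 1 : ℕ) : ℝ) * (1 - y) ^ (m - 1 - 1) * (-1))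
          = (1 - y) ^ (m - 2) * (1 - (m:ℝ) * y) := by
        have h1 : m - 1 = (m - 2) + 1 := by omega
        have h2 : m - 1 - 1 = m - 2 := by omega
        have h3 : ((m - 1 : ℕ) : ℝ) = (m:ℝ) - 1 := by
          have : (1:ℕ) ≤ m := by omega
          push_cast [Nat.cast_sub this]; ring
        rw [h3, h2, h1, pow_succ]
        ring
      rw [key]
      have hmy : 1 < (m:ℝ) * y := by
        have := hy.1
        rw [div_lt_iff₀ hm0] at this
        linarith
      exact mul_neg_of_pos_of_neg (by positivity) (by linarith)
  have h1m : 1 / (m:ℝ) ≤ 1 := by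
    rw [div_le_one hm0]; exact_mod_cast by omega
  exact hanti ⟨le_refl _, h1m⟩ ⟨le_of_lt hx1, hx2⟩ hx1

/-- Any policy with `μ(m₀) > 1/m₀` for some `m₀ ≥ 2` is strictly dominated:
replacing `μ(m₀)` by `1/m₀` strictly increases the throughput `R` and strictly
decreases the average power `Q`. -/
theorem stmt8 (N m₀ : ℕ) (hN : 2 ≤ N) (hm₀ : 2 ≤ m₀) (hm₀N : m₀ ≤ N)
    (piH : ℝ) (hpiH : piH ∈ Set.Ioo (0:ℝ) 1)
    (μ : ℕ → ℝ) (hμ : ∀ m ∈ Finset.Icc 1 N, μ m ∈ Set.Icc (0:ℝ) 1)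
    (hbig : 1 / (m₀ : ℝ) < μ m₀) :
    let piL : ℝ := 1 - piH
    let Q : (ℕ → ℝ) → ℝ := fun ν => ∑ m ∈ Finset.range N,
      ((N - 1).choose m : ℝ) * piH ^ m * piL ^ (N - 1 - m) * ν (m + 1)
    let R : (ℕ → ℝ) → ℝ := fun ν => ∑ m ∈ Finset.Icc 1 N,
      (N.choose m : ℝ) * piH ^ m * piL ^ (N - m) * m * ν m * (1 - ν m) ^ (m - 1)
    let μ' : ℕ → ℝ := Function.update μ m₀ (1 / m₀)
    R μ < R μ' ∧ Q μ' < Q μ := by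
  intro piL Q R μ'
  obtain ⟨hH0, hH1⟩ := hpiH
  have hL0 : 0 < piL := by simp only [piL]; linarith
  have hm₀mem : m₀ ∈ Finset.Icc 1 N := Finset.mem_Icc.mpr ⟨by omega, hm₀N⟩
  have hμm₀ := hμ m₀ hm₀mem
  have hupd : μ' m₀ = 1 / (m₀:ℝ) := Function.update_self _ _ _
  have hupd' : ∀ k, k ≠ m₀ → μ' k = μ k := fun k hk => Function.update_of_ne hk _ _
  constructor
  · apply Finset.sum_lt_sum
    · intro i hi
      rcases eq_or_ne i m₀ with heq | hne
      · rw [heq, hupd]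
        have := aux_dec m₀ hm₀ (μ m₀) hbig hμm₀.2
        have hc : (0:ℝ) < (N.choose m₀ : ℝ) * piH ^ m₀ * piL ^ (N - m₀) * m₀ := by
          have h1 : (0:ℝ) < (N.choose m₀ : ℝ) := by exact_mod_cast Nat.choose_pos hm₀N
          have h2 : (0:ℝ) < (m₀:ℝ) := by exact_mod_cast (by omega : 0 < m₀)
          exact mul_pos (mul_pos (mul_pos h1 (pow_pos hH0 _)) (pow_pos hL0 _)) h2
        calc (N.choose m₀ : ℝ) * piH ^ m₀ * piL ^ (N - m₀) * m₀ * μ m₀ * (1 - μ m₀) ^ (m₀ - 1)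
            = ((N.choose m₀ : ℝ) * piH ^ m₀ * piL ^ (N - m₀) * m₀) * (μ m₀ * (1 - μ m₀) ^ (m₀ - 1)) := by ring
          _ ≤ ((N.choose m₀ : ℝ) * piH ^ m₀ * piL ^ (N - m₀) * m₀) * (1 / (m₀:ℝ) * (1 - 1 / (m₀:ℝ)) ^ (m₀ - 1)) := by
              exact le_of_lt (by exact mul_lt_mul_of_pos_left this hc)
          _ = (N.choose m₀ : ℝ) * piH ^ m₀ * piL ^ (N - m₀) * m₀ * (1 / (m₀:ℝ)) * (1 - 1 / (m₀:ℝ)) ^ (m₀ - 1) := by ring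
      · rw [hupd' i hne]
    · refine ⟨m₀, hm₀mem, ?_⟩
      rw [hupd]
      have := aux_dec m₀ hm₀ (μ m₀) hbig hμm₀.2
      have hc : (0:ℝ) < (N.choose m₀ : ℝ) * piH ^ m₀ * piL ^ (N - m₀) * m₀ := by
        have h1 : (0:ℝ) < (N.choose m₀ : ℝ) := by exact_mod_cast Nat.choose_pos hm₀N
        have h2 : (0:ℝ) < (m₀:ℝ) := by exact_mod_cast (by omega : 0 < m₀)
        exact mul_pos (mul_pos (mul_pos h1 (pow_pos hH0 _)) (pow_pos hL0 _)) h2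
      calc (N.choose m₀ : ℝ) * piH ^ m₀ * piL ^ (N - m₀) * m₀ * μ m₀ * (1 - μ m₀) ^ (m₀ - 1)
          = ((N.choose m₀ : ℝ) * piH ^ m₀ * piL ^ (N - m₀) * m₀) * (μ m₀ * (1 - μ m₀) ^ (m₀ - 1)) := by ring
        _ < ((N.choose m₀ : ℝ) * piH ^ m₀ * piL ^ (N - m₀) * m₀) * (1 / (m₀:ℝ) * (1 - 1 / (m₀:ℝ)) ^ (m₀ - 1)) :=
            mul_lt_mul_of_pos_left this hc
        _ = (N.choose m₀ : ℝ) * piH ^ m₀ * piL ^ (N - m₀) * m₀ * (1 / (m₀:ℝ)) * (1 - 1 / (m₀:ℝ)) ^ (m₀ - 1) := by ring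
  · apply Finset.sum_lt_sum
    · intro i hi
      rcases eq_or_ne (i + 1) m₀ with heq | hne
      · rw [heq, hupd]
        have hc : (0:ℝ) ≤ ((N-1).choose i : ℝ) * piH ^ i * piL ^ (N - 1 - i) := by positivity
        exact mul_le_mul_of_nonneg_left (le_of_lt hbig) hc
      · rw [hupd' _ hne]
    · refine ⟨m₀ - 1, Finset.mem_range.mpr (by omega), ?_⟩
      have h1 : m₀ - 1 + 1 = m₀ := by omega
      rw [h1, hupd]
      have hc : (0:ℝ) < ((N-1).choose (m₀-1) : ℝ) * piH ^ (m₀-1) * piL ^ (N - 1 - (m₀-1)) := by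
        have h1 : (0:ℝ) < ((N-1).choose (m₀-1) : ℝ) := by
          exact_mod_cast Nat.choose_pos (show m₀ - 1 ≤ N - 1 by omega)
        exact mul_pos (mul_pos h1 (pow_pos hH0 _)) (pow_pos hL0 _)
      exact mul_lt_mul_of_pos_left hbig hc
end

section
/- For π_H ∈ (0,1), π_L = 1−π_H, N ≥ 2, and π_L^(N−1) < λ < (1−π_L^N)/(N·π_H), there exists a unique φ ∈ (0,1) such that the policy μ^(φ) with μ^(φ)(1)=1 and μ^(φ)(m) the unique solution in (0,1/m) of (1−u)^(m−2)(1−m·u)=φ for m≥2 satisfies ∑_{m=0}^{N−1} C(N−1,m)·π_H^m·π_L^(N−1−m)·μ^(φ)(m+1) = λ. -/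
noncomputable section

private def gfun (m : ℕ) (u : ℝ) : ℝ := (1 - u) ^ (m - 2) * (1 - (m : ℝ) * u)

private lemma gfun_cont (m : ℕ) : Continuous (gfun m) := by
  unfold gfun; fun_prop

private lemma gfun_zero (m : ℕ) : gfun m 0 = 1 := by simp [gfun]

private lemma gfun_at_inv {m : ℕ} (hm : 2 ≤ m) : gfun m (m : ℝ)⁻¹ = 0 := by
  have h : (m : ℝ) ≠ 0 := Nat.cast_ne_zero.mpr (by omega)
  simp [gfun, mul_inv_cancel₀ h]

private lemma gfun_anti {m : ℕ} (hm : 2 ≤ m) :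
    StrictAntiOn (gfun m) (Set.Icc 0 (m : ℝ)⁻¹) := by
  have hm0 : (0:ℝ) < m := by exact_mod_cast (show 0 < m by omega)
  have hinv1 : (m:ℝ)⁻¹ < 1 := by
    rw [inv_lt_one_iff₀]; right; exact_mod_cast Nat.lt_of_lt_of_le Nat.one_lt_two hm
  intro u hu v hv huv
  have h1u : 0 < 1 - u := by nlinarith [hu.2, hv.1]
  have h1v : 0 ≤ 1 - v := by nlinarith [hv.2]
  have hpow : (1 - v) ^ (m - 2) ≤ (1 - u) ^ (m - 2) :=
    pow_le_pow_left₀ h1v (by linarith) _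
  have h2 : 0 ≤ 1 - (m:ℝ) * v := by
    have : (m:ℝ) * v ≤ (m:ℝ) * (m:ℝ)⁻¹ := mul_le_mul_of_nonneg_left hv.2 hm0.le
    rw [mul_inv_cancel₀ hm0.ne'] at this; linarith
  have h3 : 1 - (m:ℝ) * v < 1 - (m:ℝ) * u := by nlinarith
  calc gfun m v ≤ (1 - u) ^ (m - 2) * (1 - (m:ℝ) * v) :=
        mul_le_mul_of_nonneg_right hpow h2
    _ < gfun m u := by
        exact mul_lt_mul_of_pos_left h3 (pow_pos h1u _)

private lemma gfun_image {m : ℕ} (hm : 2 ≤ m) :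
    (fun u => -gfun m u) '' Set.Icc 0 (m : ℝ)⁻¹ = Set.Icc (-1 : ℝ) 0 := by
  have hm0 : (0:ℝ) < m := by exact_mod_cast (show 0 < m by omega)
  have h0m : (0:ℝ) ≤ (m:ℝ)⁻¹ := by positivity
  have h0mem : (0:ℝ) ∈ Set.Icc 0 (m:ℝ)⁻¹ := ⟨le_refl _, h0m⟩
  have hmmem : (m:ℝ)⁻¹ ∈ Set.Icc 0 (m:ℝ)⁻¹ := ⟨h0m, le_refl _⟩
  apply subset_antisymm
  · rintro _ ⟨u, hu, rfl⟩
    have h1 : gfun m u ≤ gfun m 0 := (gfun_anti hm).antitoneOn h0mem hu hu.1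
    have h2 : gfun m (m:ℝ)⁻¹ ≤ gfun m u := (gfun_anti hm).antitoneOn hu hmmem hu.2
    rw [gfun_zero] at h1
    rw [gfun_at_inv hm] at h2
    have : -gfun m u ∈ Set.Icc (-1:ℝ) 0 := ⟨by linarith, by linarith⟩
    exact this
  · have := intermediate_value_Icc h0m ((gfun_cont m).neg.continuousOn
      (s := Set.Icc 0 (m:ℝ)⁻¹))
    simpa [gfun_zero, gfun_at_inv hm] using this

private def rootIso (m : ℕ) (hm : 2 ≤ m) :
    Set.Icc (0:ℝ) (m : ℝ)⁻¹ ≃o Set.Icc (-1 : ℝ) 0 :=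
  (StrictMonoOn.orderIso (fun u => -gfun m u) _
    (fun u hu v hv huv => neg_lt_neg (gfun_anti hm hu hv huv))).trans
    (OrderIso.setCongr _ _ (gfun_image hm))

private lemma rootIso_apply {m : ℕ} (hm : 2 ≤ m) (x : Set.Icc (0:ℝ) (m:ℝ)⁻¹) :
    ((rootIso m hm x : ℝ)) = -gfun m x := rfl

private def Ufun (m : ℕ) (φ : ℝ) : ℝ :=
  if hm : 2 ≤ m then
    ((rootIso m hm).symm (Set.projIcc (-1) 0 (by norm_num) (-φ)) : ℝ)
  else 1

private lemma Ufun_mem {m : ℕ} (hm : 2 ≤ m) (φ : ℝ) :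
    Ufun m φ ∈ Set.Icc (0:ℝ) (m:ℝ)⁻¹ := by
  rw [Ufun, dif_pos hm]; exact Subtype.property _

private lemma gfun_Ufun {m : ℕ} (hm : 2 ≤ m) {φ : ℝ} (hφ : φ ∈ Set.Icc (0:ℝ) 1) :
    gfun m (Ufun m φ) = φ := by
  have hmem : -φ ∈ Set.Icc (-1:ℝ) 0 := ⟨by linarith [hφ.2], by linarith [hφ.1]⟩
  have h2 := congrArg Subtype.val ((rootIso m hm).apply_symm_apply ⟨-φ, hmem⟩)
  rw [rootIso_apply hm] at h2
  have h4 : ((⟨-φ, hmem⟩ : Set.Icc (-1:ℝ) 0) : ℝ) = -φ := rfl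
  rw [h4] at h2
  have h3 : Ufun m φ = ((rootIso m hm).symm ⟨-φ, hmem⟩ : ℝ) := by
    rw [Ufun, dif_pos hm, Set.projIcc_of_mem _ hmem]
  rw [h3]
  linarith

private lemma Ufun_cont (m : ℕ) : Continuous (Ufun m) := by
  by_cases hm : 2 ≤ m
  · unfold Ufun
    simp only [dif_pos hm]
    exact continuous_subtype_val.comp (((rootIso m hm).symm.continuous).comp
      (continuous_projIcc.comp continuous_neg))
  · unfold Ufun
    simp only [dif_neg hm]
    exact continuous_const

private lemma Ufun_antiOn {m : ℕ} (hm : 2 ≤ m) :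
    StrictAntiOn (Ufun m) (Set.Icc (0:ℝ) 1) := by
  intro φ hφ ψ hψ hlt
  by_contra hle
  push_neg at hle
  have h := (gfun_anti hm).antitoneOn (Ufun_mem hm φ) (Ufun_mem hm ψ) hle
  rw [gfun_Ufun hm hφ, gfun_Ufun hm hψ] at h
  linarith

private lemma Ufun_one {m : ℕ} (hm : 2 ≤ m) : Ufun m 1 = 0 := by
  have h0m : (0:ℝ) ≤ (m:ℝ)⁻¹ := by positivity
  exact (gfun_anti hm).injOn (Ufun_mem hm 1) ⟨le_refl _, h0m⟩
    (by rw [gfun_Ufun hm ⟨zero_le_one, le_refl _⟩, gfun_zero])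

private lemma Ufun_zero {m : ℕ} (hm : 2 ≤ m) : Ufun m 0 = (m:ℝ)⁻¹ := by
  have h0m : (0:ℝ) ≤ (m:ℝ)⁻¹ := by positivity
  exact (gfun_anti hm).injOn (Ufun_mem hm 0) ⟨h0m, le_refl _⟩
    (by rw [gfun_Ufun hm ⟨le_refl _, zero_le_one⟩, gfun_at_inv hm])

private lemma Ufun_Ioo {m : ℕ} (hm : 2 ≤ m) {φ : ℝ} (hφ : φ ∈ Set.Ioo (0:ℝ) 1) :
    Ufun m φ ∈ Set.Ioo (0:ℝ) (m:ℝ)⁻¹ := by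
  obtain ⟨h1, h2⟩ := Ufun_mem hm φ
  have hg := gfun_Ufun hm ⟨hφ.1.le, hφ.2.le⟩
  constructor
  · rcases h1.lt_or_eq with h | h
    · exact h
    · exfalso; rw [← h, gfun_zero] at hg; exact absurd hg.symm hφ.2.ne
  · rcases h2.lt_or_eq with h | h
    · exact h
    · exfalso; rw [h, gfun_at_inv hm] at hg; exact absurd hg.symm hφ.1.ne'

private def Vfun (k : ℕ) (φ : ℝ) : ℝ := if k = 1 then 1 else Ufun k φ

private lemma Vfun_cont (k : ℕ) : Continuous (Vfun k) := by
  unfold Vfun; split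
  · exact continuous_const
  · exact Ufun_cont k

end

/-- Intermediate regime: for `π_L^(N−1) < λ < (1−π_L^N)/(N·π_H)` there is a
unique `φ ∈ (0,1)` such that the policy `μ^(φ)` (with `μ^(φ)(1) = 1` and
`μ^(φ)(m)` the unique root in `(0,1/m)` of `(1−u)^(m−2)(1−m·u) = φ` for
`m ≥ 2`) meets the average-power constraint with equality. -/
theorem stmt10 (N : ℕ) (hN : 2 ≤ N) (piH lam : ℝ) (hpiH : piH ∈ Set.Ioo (0:ℝ) 1)
    (hlam₁ : (1 - piH) ^ (N - 1) < lam)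
    (hlam₂ : lam < (1 - (1 - piH) ^ N) / (N * piH)) :
    ∃! φ : ℝ, φ ∈ Set.Ioo (0:ℝ) 1 ∧ ∃ u : ℕ → ℝ, u 1 = 1 ∧
      (∀ m : ℕ, 2 ≤ m → m ≤ N →
        u m ∈ Set.Ioo (0:ℝ) (1 / m) ∧ (1 - u m) ^ (m - 2) * (1 - m * u m) = φ) ∧
      ∑ m ∈ Finset.range N,
        ((N - 1).choose m : ℝ) * piH ^ m * (1 - piH) ^ (N - 1 - m) * u (m + 1) = lam := by
  obtain ⟨hpiH0, hpiH1⟩ := hpiH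
  set piL := 1 - piH with hpiL_def
  have hpiL0 : 0 < piL := by simp [hpiL_def]; linarith
  set Q : ℝ → ℝ := fun φ => ∑ m ∈ Finset.range N,
    ((N - 1).choose m : ℝ) * piH ^ m * piL ^ (N - 1 - m) * Vfun (m + 1) φ with hQ_def
  have hQcont : Continuous Q := by
    apply continuous_finset_sum
    intro m _
    exact continuous_const.mul (Vfun_cont (m + 1))
  -- coefficient positivity
  have hc : ∀ m ∈ Finset.range N, 0 < ((N - 1).choose m : ℝ) * piH ^ m * piL ^ (N - 1 - m) := by
    intro m hmem
    rw [Finset.mem_range] at hmem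
    have h' : (0:ℝ) < ((N - 1).choose m : ℝ) := by
      exact_mod_cast Nat.choose_pos (show m ≤ N - 1 by omega)
    exact mul_pos (mul_pos h' (pow_pos hpiH0 m)) (pow_pos hpiL0 _)
  -- Q is strictly antitone on [0,1]
  have hQanti : StrictAntiOn Q (Set.Icc (0:ℝ) 1) := by
    intro φ hφ ψ hψ hlt
    apply Finset.sum_lt_sum
    · intro m hmem
      rcases Nat.eq_zero_or_pos m with rfl | hm1
      · simp [Vfun]
      · have hm2 : 2 ≤ m + 1 := by omega
        have hV : Ufun (m+1) ψ ≤ Ufun (m+1) φ := (Ufun_antiOn hm2 hφ hψ hlt).le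
        have : Vfun (m+1) ψ ≤ Vfun (m+1) φ := by
          simp only [Vfun, if_neg (by omega : ¬ m + 1 = 1)]; exact hV
        exact mul_le_mul_of_nonneg_left this (hc m hmem).le
    · refine ⟨1, Finset.mem_range.mpr (by omega), ?_⟩
      have hV : Ufun 2 ψ < Ufun 2 φ := Ufun_antiOn (le_refl 2) hφ hψ hlt
      have : Vfun 2 ψ < Vfun 2 φ := by
        simp only [Vfun, if_neg (show ¬ (2:ℕ) = 1 by omega)]; exact hV
      exact mul_lt_mul_of_pos_left this (hc 1 (Finset.mem_range.mpr (by omega)))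
  -- Q 1
  have hQ1 : Q 1 = piL ^ (N - 1) := by
    have h0 : ∀ b ∈ Finset.range N, b ≠ 0 →
        ((N - 1).choose b : ℝ) * piH ^ b * piL ^ (N - 1 - b) * Vfun (b + 1) 1 = 0 := by
      intro m _ hm0
      have hm2 : 2 ≤ m + 1 := by omega
      simp only [Vfun, if_neg (show ¬ m + 1 = 1 by omega), Ufun_one hm2, mul_zero]
    simp only [hQ_def]
    rw [Finset.sum_eq_single_of_mem 0 (Finset.mem_range.mpr (by omega)) h0]
    simp [Vfun]
  -- Q 0
  have hNpos : (0:ℝ) < N := by exact_mod_cast (by omega : 0 < N)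
  have hQ0 : Q 0 = (1 - piL ^ N) / (N * piH) := by
    have hterm : ∀ m ∈ Finset.range N,
        ((N - 1).choose m : ℝ) * piH ^ m * piL ^ (N - 1 - m) * Vfun (m + 1) 0
        = ((N - 1).choose m : ℝ) * piH ^ m * piL ^ (N - 1 - m) * ((m:ℝ) + 1)⁻¹ := by
      intro m _
      rcases Nat.eq_zero_or_pos m with rfl | hm1
      · norm_num [Vfun]
      · have hm2 : 2 ≤ m + 1 := by omega
        simp only [Vfun, if_neg (by omega : ¬ m + 1 = 1), Ufun_zero hm2]
        push_cast
        ring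
    simp only [hQ_def]
    rw [Finset.sum_congr rfl hterm, eq_div_iff (by positivity), Finset.sum_mul]
    have hkey : ∀ m ∈ Finset.range N,
        ((N - 1).choose m : ℝ) * piH ^ m * piL ^ (N - 1 - m) * ((m:ℝ) + 1)⁻¹ * ((N:ℝ) * piH)
        = (N.choose (m+1) : ℝ) * piH ^ (m+1) * piL ^ (N - 1 - m) := by
      intro m _
      have hch : (N:ℝ) * ((N - 1).choose m : ℝ) = (N.choose (m+1) : ℝ) * ((m:ℝ) + 1) := by
        have h5 : N * ((N - 1).choose m) = N.choose (m + 1) * (m + 1) := by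
          have := Nat.add_one_mul_choose_eq (N - 1) m
          rwa [show N - 1 + 1 = N by omega] at this
        exact_mod_cast h5
      have hchoose : ((N - 1).choose m : ℝ) = (N.choose (m+1) : ℝ) * ((m:ℝ) + 1) / N := by
        rw [eq_div_iff hNpos.ne']
        linarith [hch]
      have hm0 : ((m:ℝ) + 1) ≠ 0 := by positivity
      rw [hchoose, pow_succ]
      field_simp
    rw [Finset.sum_congr rfl hkey]
    have hbin : ∑ k ∈ Finset.range (N + 1),
        piH ^ k * piL ^ (N - k) * (N.choose k : ℝ) = 1 := by
      have := add_pow piH piL N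
      rw [show piH + piL = 1 by simp [hpiL_def]] at this
      simpa using this.symm
    rw [Finset.sum_range_succ'] at hbin
    simp only [pow_zero, one_mul, Nat.choose_zero_right, Nat.cast_one, mul_one, Nat.sub_zero]
      at hbin
    have : ∑ i ∈ Finset.range N, piH ^ (i + 1) * piL ^ (N - (i + 1)) * (N.choose (i+1) : ℝ)
        = 1 - piL ^ N := by linarith
    rw [← this]
    apply Finset.sum_congr rfl
    intro m _
    have : N - (m + 1) = N - 1 - m := by omega
    rw [this]; ring
  -- IVT
  have hmem : lam ∈ Set.Ioo (Q 1) (Q 0) := by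
    rw [hQ1, hQ0]
    exact ⟨hlam₁, hlam₂⟩
  obtain ⟨φ₀, hφ₀, hQφ₀⟩ := intermediate_value_Ioo' zero_le_one hQcont.continuousOn hmem
  refine ⟨φ₀, ⟨hφ₀, fun k => Vfun k φ₀, by simp [Vfun], ?_, hQφ₀⟩, ?_⟩
  · intro m hm2 hmN
    have hne1 : ¬ m = 1 := by omega
    constructor
    · have := Ufun_Ioo hm2 hφ₀
      simpa [Vfun, if_neg hne1, one_div] using this
    · simp only [Vfun, if_neg hne1]
      exact gfun_Ufun hm2 ⟨hφ₀.1.le, hφ₀.2.le⟩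
  · rintro ψ ⟨hψ, u, hu1, hroot, hsum⟩
    have hQψ : Q ψ = lam := by
      simp only [hQ_def]
      rw [← hsum]
      apply Finset.sum_congr rfl
      intro m hmem'
      rw [Finset.mem_range] at hmem'
      rcases Nat.eq_zero_or_pos m with rfl | hm1
      · simp [Vfun, hu1]
      · have hm2 : 2 ≤ m + 1 := by omega
        have hmN : m + 1 ≤ N := by omega
        obtain ⟨hIoo, heq⟩ := hroot (m+1) hm2 hmN
        have humem : u (m+1) ∈ Set.Icc (0:ℝ) ((m+1:ℕ):ℝ)⁻¹ := by
          rw [one_div] at hIoo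
          exact ⟨hIoo.1.le, hIoo.2.le⟩
        have : u (m+1) = Ufun (m+1) ψ := by
          apply (gfun_anti hm2).injOn humem (Ufun_mem hm2 ψ)
          rw [gfun_Ufun hm2 ⟨hψ.1.le, hψ.2.le⟩]
          exact heq
        simp only [Vfun, if_neg (by omega : ¬ m + 1 = 1), ← this]
    have := hQanti.injOn (Set.mem_Icc_of_Ioo hψ) (Set.mem_Icc_of_Ioo hφ₀)
      (by rw [hQψ, hQφ₀])
    exact this
end
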